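/- Let Ω ⊆ ℝⁿ be a nonempty, open and convex set, let y be an exposed point of the closure of Ω, and let ρ > 0. Then there exist z ∈ Ω and s > 0 such that (B̄(2z, s) − Ω) ∩ Ω ⊆ B(y, ρ). -/

import Mathlib

open Set Metric
open scoped RealInnerProductSpace Pointwise

/-- If `y` is an exposed point of the closure of a nonempty open convex set `Ω ⊆ ℝⁿ`
and `ρ > 0`, then there are `z ∈ Ω` and `s > 0` with `(B̄(2z, s) − Ω) ∩ Ω ⊆ B(y, ρ)`. -/
theorem exists_ball_of_exposed_point
    (n : ℕ) (Ω : Set (EuclideanSpace ℝ (Fin n)))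
    (hne : Ω.Nonempty) (hop : IsOpen Ω) (hconv : Convex ℝ Ω)
    (y : EuclideanSpace ℝ (Fin n)) (hy : y ∈ closure Ω)
    (hexp : ∃ a : EuclideanSpace ℝ (Fin n), a ≠ 0 ∧
        ∀ x ∈ closure Ω, x ≠ y → ⟪x, a⟫ < ⟪y, a⟫)
    (ρ : ℝ) (hρ : 0 < ρ) :
    ∃ z ∈ Ω, ∃ s : ℝ, 0 < s ∧
      (closedBall ((2 : ℝ) • z) s - Ω) ∩ Ω ⊆ ball y ρ := by
  obtain ⟨a, ha0, ha⟩ := hexp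
  have hle : ∀ x ∈ closure Ω, ⟪x, a⟫ ≤ ⟪y, a⟫ := by
    intro x hx
    rcases eq_or_ne x y with rfl | hxy
    · exact le_refl _
    · exact (ha x hx hxy).le
  set K := closure Ω ∩ sphere y ρ with hKdef
  have hcont : ContinuousOn (fun x => ⟪x, a⟫) K :=
    (continuous_id.inner continuous_const).continuousOn
  have hKcomp : IsCompact K := (isCompact_sphere y ρ).inter_left isClosed_closure
  have main : ∀ ε : ℝ, 0 < ε → (∀ p ∈ K, ⟪p, a⟫ ≤ ⟪y, a⟫ - ε) →
      ∀ x ∈ closure Ω, ⟪y, a⟫ - ε < ⟪x, a⟫ → dist x y < ρ := by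
    intro ε hε hbound x hx hxa
    by_contra hdist
    push_neg at hdist
    have hd : 0 < dist x y := lt_of_lt_of_le hρ hdist
    set t : ℝ := ρ / dist x y with ht
    have ht0 : 0 < t := div_pos hρ hd
    have ht1 : t ≤ 1 := (div_le_one hd).mpr hdist
    set p := y + t • (x - y) with hp
    have hpmem : p ∈ closure Ω :=
      hconv.closure.add_smul_sub_mem hy hx ⟨ht0.le, ht1⟩
    have hpdist : dist p y = ρ := by
      rw [dist_eq_norm]
      have : p - y = t • (x - y) := by simp [hp]
      rw [this, norm_smul, Real.norm_eq_abs, abs_of_pos ht0, ← dist_eq_norm, ht]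
      field_simp
    have hpK : p ∈ K := ⟨hpmem, mem_sphere.mpr hpdist⟩
    have h1 := hbound p hpK
    have h2 : ⟪p, a⟫ = ⟪y, a⟫ + t * (⟪x, a⟫ - ⟪y, a⟫) := by
      rw [hp, inner_add_left, real_inner_smul_left, inner_sub_left]
    have hxy := hle x hx
    nlinarith [hle x hx]
  have key : ∃ ε > 0, ∀ x ∈ closure Ω, ⟪y, a⟫ - ε < ⟪x, a⟫ → dist x y < ρ := by
    by_cases hKne : K.Nonempty
    · obtain ⟨x₀, hx₀K, hmax⟩ := hKcomp.exists_isMaxOn hKne hcont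
      have hx₀y : x₀ ≠ y := by
        intro h
        have h2 := hx₀K.2
        rw [h] at h2
        simp [mem_sphere] at h2
        exact (ne_of_gt hρ) h2.symm
      have hlt := ha x₀ hx₀K.1 hx₀y
      refine ⟨⟪y, a⟫ - ⟪x₀, a⟫, by linarith, main _ (by linarith) ?_⟩
      intro p hpK
      have h : ⟪p, a⟫ ≤ ⟪x₀, a⟫ := hmax hpK
      linarith
    · refine ⟨1, one_pos, main 1 one_pos ?_⟩
      intro p hp
      exact absurd ⟨p, hp⟩ hKne
  obtain ⟨ε, hε, hεball⟩ := key
  have hanorm : (0:ℝ) < ‖a‖ := norm_pos_iff.mpr ha0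
  obtain ⟨z, hz, hzd⟩ : ∃ z ∈ Ω, dist y z < ε / (8 * ‖a‖) :=
    Metric.mem_closure_iff.mp hy _ (by positivity)
  refine ⟨z, hz, ε / (4 * ‖a‖), by positivity, ?_⟩
  rintro u ⟨⟨w, hw, v, hv, rfl⟩, hu⟩
  have hza : ⟪y, a⟫ - ⟪z, a⟫ < ε / 8 := by
    have h1 : |⟪y - z, a⟫| ≤ ‖y - z‖ * ‖a‖ := abs_real_inner_le_norm _ _
    have h2 : ‖y - z‖ * ‖a‖ < (ε / (8 * ‖a‖)) * ‖a‖ := by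
      apply mul_lt_mul_of_pos_right _ hanorm
      rw [← dist_eq_norm]
      exact hzd
    have h3 : (ε / (8 * ‖a‖)) * ‖a‖ = ε / 8 := by field_simp
    have h4 : ⟪y - z, a⟫ ≤ |⟪y - z, a⟫| := le_abs_self _
    rw [inner_sub_left] at h4 h1
    linarith
  have hwa : 2 * ⟪z, a⟫ - ε / 4 ≤ ⟪w, a⟫ := by
    have h1 : |⟪w - (2:ℝ) • z, a⟫| ≤ ‖w - (2:ℝ) • z‖ * ‖a‖ := abs_real_inner_le_norm _ _
    have h2 : ‖w - (2:ℝ) • z‖ ≤ ε / (4 * ‖a‖) := by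
      rw [← dist_eq_norm]
      exact mem_closedBall.mp hw
    have h3 : ‖w - (2:ℝ) • z‖ * ‖a‖ ≤ (ε / (4 * ‖a‖)) * ‖a‖ :=
      mul_le_mul_of_nonneg_right h2 hanorm.le
    have h4 : (ε / (4 * ‖a‖)) * ‖a‖ = ε / 4 := by field_simp
    have h5 : -|⟪w - (2:ℝ) • z, a⟫| ≤ ⟪w - (2:ℝ) • z, a⟫ := neg_abs_le _
    rw [inner_sub_left, real_inner_smul_left] at h5 h1
    linarith
  have hva : ⟪v, a⟫ ≤ ⟪y, a⟫ := hle v (subset_closure hv)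
  have hfinal : ⟪y, a⟫ - ε < ⟪w - v, a⟫ := by
    rw [inner_sub_left]
    linarith
  exact mem_ball.mpr (hεball _ (subset_closure hu) hfinal)
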